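/- Let c>0 and let φ_t(n) := P_t^{ℕ0} 1_{ℕ+}(n) be the heat semigroup of the birth-death chain on ℕ0 with rates 2c and absorbing state 0 applied to the indicator of the positive integers. Then φ_t(y) ≥ φ_t(x) whenever x ≤ y in ℕ0, for every t ≥ 0. -/

import Mathlib

open scoped BigOperators Classical

namespace OllivierGraph

variable {V : Type*}

/-- A graph structure on `V`: non-negative edge weights with finitely many
neighbours for every vertex. -/
def IsGraph (q : V → V → ℝ) : Prop :=
  (∀ x y, 0 ≤ q x y) ∧ ∀ x, {y | 0 < q x y}.Finite

/-- `m` is an invariant measure for `q`, i.e. `q` is reversible w.r.t. `m`. -/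
def IsInvariantMeasure (q : V → V → ℝ) (m : V → ℝ) : Prop :=
  (∀ x, 0 < m x) ∧ ∀ x y, q x y * m x = q y x * m y

/-- Reversibility (undirectedness) of the graph. -/
def IsReversible (q : V → V → ℝ) : Prop :=
  ∃ m : V → ℝ, IsInvariantMeasure q m

/-- The graph Laplacian `Δ f (x) = Σ_y q(x,y)(f(y) - f(x))`. -/
noncomputable def lap (q : V → V → ℝ) (f : V → ℝ) (x : V) : ℝ :=
  ∑' y, q x y * (f y - f x)

/-- The set of lengths of walks from `x` to `y`. -/
def walkLens (q : V → V → ℝ) (x y : V) : Set ℕ :=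
  {n | ∃ p : ℕ → V, p 0 = x ∧ p n = y ∧ ∀ i < n, 0 < q (p i) (p (i + 1))}

/-- The combinatorial distance. -/
noncomputable def gdist (q : V → V → ℝ) (x y : V) : ℕ :=
  sInf (walkLens q x y)

/-- Connectedness: every two vertices are joined by some walk. -/
def GConnected (q : V → V → ℝ) : Prop :=
  ∀ x y : V, (walkLens q x y).Nonempty

/-- `q_min`: the infimum of the positive edge weights. -/
noncomputable def qmin (q : V → V → ℝ) : ℝ :=
  sInf {c : ℝ | 0 < c ∧ ∃ x y, q x y = c}

/-- Boundedness of a real valued function. -/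
def IsBoundedFun (f : V → ℝ) : Prop := ∃ C, ∀ x, |f x| ≤ C

/-- Supremum norm. -/
noncomputable def supNorm (f : V → ℝ) : ℝ := ⨆ x, |f x|

/-- `∇_{xy} f = (f(x) - f(y)) / d(x,y)`. -/
noncomputable def gradxy (q : V → V → ℝ) (f : V → ℝ) (x y : V) : ℝ :=
  (f x - f y) / (gdist q x y : ℝ)

/-- `‖∇ f‖_∞ = sup_{x ≠ y} |∇_{xy} f|`. -/
noncomputable def gradNorm (q : V → V → ℝ) (f : V → ℝ) : ℝ :=
  ⨆ p : {p : V × V // p.1 ≠ p.2}, |gradxy q f p.1.1 p.1.2|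

/-- Ollivier curvature `κ(x,y)`. -/
noncomputable def kappa (q : V → V → ℝ) (x y : V) : ℝ :=
  sInf {c | ∃ f : V → ℝ, gradxy q f y x = 1 ∧ gradNorm q f = 1 ∧
    c = gradxy q (lap q f) x y}

/-- Non-negative Ollivier curvature. -/
def NonnegOllivier (q : V → V → ℝ) : Prop :=
  ∀ x y : V, x ≠ y → 0 ≤ kappa q x y

/-- Transport plan from `x0` to `y0`. -/
def IsTransportPlan (q : V → V → ℝ) (x0 y0 : V) (ρ : V → V → ℝ) : Prop :=
  (∀ x y, 0 ≤ ρ x y) ∧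
  (∀ x, x ≠ x0 → ∑' y, ρ x y = q x0 x) ∧
  (∀ y, y ≠ y0 → ∑' x, ρ x y = q y0 y)

/-- The cost of a transport plan. -/
noncomputable def cost (q : V → V → ℝ) (x0 y0 : V) (ρ : V → V → ℝ) : ℝ :=
  ∑' p : V × V, ρ p.1 p.2 * ((gdist q x0 y0 : ℝ) - (gdist q p.1 p.2 : ℝ))

/-- `μ_ρ(k)`: the mass transported over distance `d(x0,y0) + k`. -/
noncomputable def muRho (q : V → V → ℝ) (x0 y0 : V) (ρ : V → V → ℝ) (k : ℤ) : ℝ :=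
  ∑' p : V × V,
    if (gdist q p.1 p.2 : ℤ) - (gdist q x0 y0 : ℤ) = k then ρ p.1 p.2 else 0

/-- Optimality of a transport plan: it maximizes the cost. -/
def IsOptimalPlan (q : V → V → ℝ) (x0 y0 : V) (ρ : V → V → ℝ) : Prop :=
  IsTransportPlan q x0 y0 ρ ∧
  ∀ σ : V → V → ℝ, IsTransportPlan q x0 y0 σ → cost q x0 y0 σ ≤ cost q x0 y0 ρ

/-- A coupling graph of `q`: a graph on `V × V` whose Laplacian tensorizes. -/
def IsCouplingGraph (q : V → V → ℝ) (qt : V × V → V × V → ℝ) : Prop :=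
  IsGraph qt ∧
  ∀ f : V → ℝ,
    (∀ p : V × V, lap qt (fun r => f r.1) p = lap q f p.1) ∧
    (∀ p : V × V, lap qt (fun r => f r.2) p = lap q f p.2)

/-- A perfect coupling graph. -/
def IsPerfectCoupling (q : V → V → ℝ) (qt : V × V → V × V → ℝ) : Prop :=
  IsCouplingGraph q qt ∧
  ∀ x0 y0 : V,
    IsOptimalPlan q x0 y0 (fun x y => qt (x0, y0) (x, y)) ∧
    (∀ k : ℤ, 1 < |k| → muRho q x0 y0 (fun x y => qt (x0, y0) (x, y)) k = 0) ∧
    (x0 ≠ y0 → 2 * qmin q ≤ muRho q x0 y0 (fun x y => qt (x0, y0) (x, y)) (-1))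

/-- Truncated Laplacian `Δ_S`, corresponding to the rates `q_S(x,y) = q(x,y) 1_S(x)`. -/
noncomputable def lapS (q : V → V → ℝ) (S : Finset V) (f : V → ℝ) (x : V) : ℝ :=
  if x ∈ S then lap q f x else 0

/-- Truncated heat semigroup `P_t^S f = Σ_k t^k Δ_S^k (f · 1_S) / k!`. -/
noncomputable def heatS (q : V → V → ℝ) (S : Finset V) (t : ℝ) (f : V → ℝ) (x : V) : ℝ :=
  ∑' k : ℕ, t ^ k / (Nat.factorial k : ℝ) *
    ((lapS q S)^[k] (fun v => if v ∈ S then f v else 0)) x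

/-- Heat semigroup applied to non-negative functions: supremum of the truncations. -/
noncomputable def heatPos (q : V → V → ℝ) (t : ℝ) (f : V → ℝ) (x : V) : ℝ :=
  ⨆ S : Finset V, heatS q S t f x

/-- Heat semigroup `P_t f := P_t f_+ - P_t f_-`. -/
noncomputable def heat (q : V → V → ℝ) (t : ℝ) (f : V → ℝ) (x : V) : ℝ :=
  heatPos q t (fun v => max (f v) 0) x - heatPos q t (fun v => max (-f v) 0) x

/-- Stochastic completeness: `P_t 1 = 1`. -/
def StochasticallyComplete (q : V → V → ℝ) : Prop :=
  ∀ t : ℝ, 0 ≤ t → ∀ x, heat q t (fun _ => 1) x = 1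

/-- The birth-death chain on `ℕ` with rates `2c` and absorbing state `0`. -/
noncomputable def qBD (c : ℝ) : ℕ → ℕ → ℝ :=
  fun x y => if 0 < x ∧ (x = y + 1 ∨ y = x + 1) then 2 * c else 0

/-- `φ_t(n) = P_t^{ℕ₀} 1_{ℕ₊} (n)`. -/
noncomputable def phiBD (c : ℝ) (t : ℝ) (n : ℕ) : ℝ :=
  heat (qBD c) t (fun k => if 0 < k then 1 else 0) n

/-- `ℓ¹` norm with respect to the measure `m`. -/
noncomputable def l1Norm (m : V → ℝ) (f : V → ℝ) : ℝ := ∑' x, m x * |f x|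

/-- Membership in `ℓ¹(V, m)`. -/
def MemL1 (m : V → ℝ) (f : V → ℝ) : Prop := Summable fun x => m x * |f x|

/-- The `ℓ¹`-Wasserstein distance (via Kantorovich duality). -/
noncomputable def W1 (q : V → V → ℝ) (m : V → ℝ) (μ ν : V → ℝ) : ℝ :=
  sSup {c | ∃ g : V → ℝ, gradNorm q g ≤ 1 ∧ c = ∑' x, m x * (μ x - ν x) * g x}

/-- The Laplacian as a matrix (finite graphs). -/
noncomputable def lapMat [Fintype V] (q : V → V → ℝ) [DecidableEq V] : Matrix V V ℝ :=
  Matrix.of fun x y => q x y - if x = y then ∑ z, q x z else 0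

/-- The heat semigroup `e^{tΔ}` of a finite graph. -/
noncomputable def heatFin [Fintype V] [DecidableEq V] (q : V → V → ℝ) (t : ℝ)
    (f : V → ℝ) : V → ℝ :=
  (NormedSpace.exp (t • lapMat q)).mulVec f

/-- `λ` is an eigenvalue of `-Δ`. -/
def IsLapEigenvalue (q : V → V → ℝ) (lam : ℝ) : Prop :=
  ∃ f : V → ℝ, f ≠ 0 ∧ ∀ x, lap q f x = -lam * f x

/-- Boundary measure `|∂A|` of a set of vertices. -/
noncomputable def boundaryMeasure [Fintype V] [DecidableEq V] (q : V → V → ℝ)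
    (m : V → ℝ) (A : Finset V) : ℝ :=
  ∑ x ∈ A, ∑ y ∈ Aᶜ, m x * q x y

/-- The Cheeger constant of a finite graph. -/
noncomputable def cheeger [Fintype V] [DecidableEq V] (q : V → V → ℝ) (m : V → ℝ) : ℝ :=
  sInf {c | ∃ A : Finset V, 0 < (∑ x ∈ A, m x) ∧ 2 * (∑ x ∈ A, m x) ≤ ∑ x, m x ∧
    c = boundaryMeasure q m A / ∑ x ∈ A, m x}

/-- The diameter of a graph. -/
noncomputable def gdiam (q : V → V → ℝ) : ℝ :=
  ⨆ p : V × V, (gdist q p.1 p.2 : ℝ)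


/-- Explicit formula for the Laplacian of the birth-death chain. -/
lemma lap_qBD (c : ℝ) (g : ℕ → ℝ) (x : ℕ) :
    lap (qBD c) g x =
      if 0 < x then 2*c*(g (x+1) - g x) + 2*c*(g (x-1) - g x) else 0 := by
  unfold lap qBD
  by_cases hx : 0 < x
  · rw [tsum_eq_sum (s := {x-1, x+1}) (by
      intro b hb
      simp only [Finset.mem_insert, Finset.mem_singleton] at hb
      push_neg at hb
      have : ¬ (0 < x ∧ (x = b + 1 ∨ b = x + 1)) := by omega
      simp [this])]
    have hne : x - 1 ≠ x + 1 := by omega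
    rw [Finset.sum_insert (by simp [hne]), Finset.sum_singleton]
    rw [if_pos hx]
    split_ifs with h1 h2 <;> first | omega | ring
  · have : ∀ y : ℕ, (if 0 < x ∧ (x = y + 1 ∨ y = x + 1) then 2*c else 0) * (g y - g x) = 0 := by
      intro y
      have : ¬ (0 < x ∧ (x = y + 1 ∨ y = x + 1)) := fun h => hx h.1
      simp [this]
    simp only [this, tsum_zero, if_neg hx]

lemma abs_lapS_le (c : ℝ) (hc : 0 ≤ c) (S : Finset ℕ) (g : ℕ → ℝ) (M : ℝ)
    (hg : ∀ v, |g v| ≤ M) (x : ℕ) : |lapS (qBD c) S g x| ≤ 8*c*M := by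
  have hM : 0 ≤ M := le_trans (abs_nonneg _) (hg 0)
  have h8 : 0 ≤ 8*c*M := by positivity
  unfold lapS
  split
  · rw [lap_qBD]
    split
    · have b1 : |g (x+1) - g x| ≤ 2*M := by
        calc |g (x+1) - g x| ≤ |g (x+1)| + |g x| := abs_sub (g (x+1)) (g x)
        _ ≤ M + M := add_le_add (hg _) (hg _)
        _ = 2*M := by ring
      have b2 : |g (x-1) - g x| ≤ 2*M := by
        calc |g (x-1) - g x| ≤ |g (x-1)| + |g x| := abs_sub (g (x-1)) (g x)
        _ ≤ M + M := add_le_add (hg _) (hg _)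
        _ = 2*M := by ring
      have key : ∀ u v : ℝ, |u - v| ≤ 2*M → |2*c*(u-v)| ≤ 4*c*M := by
        intro u v h
        rw [abs_mul, abs_of_nonneg (by positivity : (0:ℝ) ≤ 2*c)]
        nlinarith
      calc |2*c*(g (x+1) - g x) + 2*c*(g (x-1) - g x)|
          ≤ |2*c*(g (x+1) - g x)| + |2*c*(g (x-1) - g x)| := abs_add_le _ _
        _ ≤ 4*c*M + 4*c*M := add_le_add (key _ _ b1) (key _ _ b2)
        _ = 8*c*M := by ring
    · simpa using h8
  · simpa using h8

lemma abs_iter_lapS_le (c : ℝ) (hc : 0 ≤ c) (S : Finset ℕ) (g : ℕ → ℝ) (M : ℝ)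
    (hg : ∀ v, |g v| ≤ M) (k : ℕ) (x : ℕ) :
    |((lapS (qBD c) S)^[k] g) x| ≤ (8*c)^k * M := by
  induction k generalizing x with
  | zero => simpa using hg x
  | succ n ih =>
    rw [Function.iterate_succ_apply']
    have := abs_lapS_le c hc S ((lapS (qBD c) S)^[n] g) ((8*c)^n * M) ih x
    calc |lapS (qBD c) S ((lapS (qBD c) S)^[n] g) x| ≤ 8*c*((8*c)^n * M) := this
      _ = (8*c)^(n+1) * M := by ring

lemma lapS_zero (q : ℕ → ℕ → ℝ) (S : Finset ℕ) :
    lapS q S (fun _ => (0:ℝ)) = fun _ => (0:ℝ) := by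
  funext x
  unfold lapS lap
  simp

lemma heatS_zero_fun (q : ℕ → ℕ → ℝ) (S : Finset ℕ) (t : ℝ) (x : ℕ) :
    heatS q S t (fun _ => (0:ℝ)) x = 0 := by
  unfold heatS
  beta_reduce
  simp only [ite_self]
  have : ∀ k : ℕ, ((lapS q S)^[k] (fun _ => (0:ℝ))) = fun _ => (0:ℝ) :=
    fun k => Function.iterate_fixed (lapS_zero q S) k
  simp [this]

lemma tsum_term_le (c t : ℝ) (hc : 0 ≤ c) (ht : 0 ≤ t) (S : Finset ℕ) (g : ℕ → ℝ)
    (hg : ∀ v, |g v| ≤ 1) (z : ℕ) :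
    (∑' k : ℕ, t ^ k / (Nat.factorial k : ℝ) * ((lapS (qBD c) S)^[k] g) z)
      ≤ ∑' k : ℕ, (8*c*t) ^ k / (Nat.factorial k : ℝ) := by
  have hiter : ∀ (k z' : ℕ), |((lapS (qBD c) S)^[k] g) z'| ≤ (8*c)^k * 1 := fun k z' =>
    abs_iter_lapS_le c hc S g 1 hg k z'
  have hmaj : Summable (fun k : ℕ => (8*c*t) ^ k / (Nat.factorial k : ℝ)) :=
    Real.summable_pow_div_factorial _
  have hbound : ∀ k : ℕ,
      ‖t ^ k / (Nat.factorial k : ℝ) * ((lapS (qBD c) S)^[k] g) z‖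
        ≤ (8*c*t) ^ k / (Nat.factorial k : ℝ) := by
    intro k
    rw [Real.norm_eq_abs, abs_mul]
    have h1 : |t ^ k / (Nat.factorial k : ℝ)| = t ^ k / (Nat.factorial k : ℝ) := by
      apply abs_of_nonneg; positivity
    rw [h1]
    calc t ^ k / (Nat.factorial k : ℝ) * |((lapS (qBD c) S)^[k] g) z|
        ≤ t ^ k / (Nat.factorial k : ℝ) * ((8*c)^k * 1) := by
          apply mul_le_mul_of_nonneg_left (hiter k z) (by positivity)
      _ = (8*c*t) ^ k / (Nat.factorial k : ℝ) := by
          rw [show (8*c*t) = (8*c)*t by ring, mul_pow]; ring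
  have hsum : Summable (fun k : ℕ =>
      t ^ k / (Nat.factorial k : ℝ) * ((lapS (qBD c) S)^[k] g) z) :=
    Summable.of_norm_bounded hmaj hbound
  refine Summable.tsum_le_tsum (fun k => ?_) hsum hmaj
  have hk := hbound k
  rw [Real.norm_eq_abs] at hk
  exact (le_abs_self _).trans hk

lemma heatS_le_B (c t : ℝ) (hc : 0 ≤ c) (ht : 0 ≤ t) (S : Finset ℕ) (f : ℕ → ℝ)
    (hf1 : ∀ v, |f v| ≤ 1) (z : ℕ) :
    heatS (qBD c) S t f z ≤ ∑' k : ℕ, (8*c*t) ^ k / (Nat.factorial k : ℝ) := by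
  unfold heatS
  refine tsum_term_le c t hc ht S _ (fun v => ?_) z
  beta_reduce
  split
  · exact hf1 v
  · simp

lemma lapS_apply (q : ℕ → ℕ → ℝ) (S : Finset ℕ) (g : ℕ → ℝ) (x : ℕ) :
    lapS q S g x = if x ∈ S then lap q g x else 0 := by
  unfold lapS
  by_cases h : x ∈ S
  · rw [if_pos h, if_pos h]
  · rw [if_neg h, if_neg h]

lemma iter_shift (c : ℝ) (S : Finset ℕ) (d : ℕ) (g g' : ℕ → ℝ)
    (hbase : ∀ v, g' (v + d) = g v) :
    ∀ k v, ((lapS (qBD c) ((S.erase 0).image (· + d)))^[k] g') (v + d)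
         = ((lapS (qBD c) S)^[k] g) v := by
  intro k
  induction k with
  | zero => intro v; simpa using hbase v
  | succ n ih =>
    intro v
    rw [Function.iterate_succ_apply', Function.iterate_succ_apply',
      lapS_apply, lapS_apply]
    rcases Nat.eq_zero_or_pos v with hv | hv
    · subst hv
      have hd : (0 + d) ∉ (S.erase 0).image (· + d) := by
        simp only [Finset.mem_image, Finset.mem_erase, zero_add]
        rintro ⟨a, ⟨ha0, _⟩, had⟩
        omega
      rw [if_neg hd]
      split
      · rw [lap_qBD]; simp
      · rfl
    · have hmem : (v + d ∈ (S.erase 0).image (· + d)) ↔ v ∈ S := by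
        simp only [Finset.mem_image, Finset.mem_erase]
        constructor
        · rintro ⟨a, ⟨ha0, haS⟩, had⟩
          have hav : a = v := by omega
          rwa [hav] at haS
        · intro hvS
          exact ⟨v, ⟨by omega, hvS⟩, rfl⟩
      by_cases hvS : v ∈ S
      · rw [if_pos (hmem.mpr hvS), if_pos hvS, lap_qBD, lap_qBD,
          if_pos (by omega : 0 < v + d), if_pos hv]
        have e1 : v + d + 1 = (v + 1) + d := by omega
        have e2 : v + d - 1 = (v - 1) + d := by omega
        rw [e1, e2, ih (v + 1), ih (v - 1), ih v]
      · rw [if_neg (fun h => hvS (hmem.mp h)), if_neg hvS]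

lemma heatS_shift (c t : ℝ) (S : Finset ℕ) (d x : ℕ) (f : ℕ → ℝ)
    (hf0 : f 0 = 0) (hfs : ∀ v, 0 < v → f (v + d) = f v) :
    heatS (qBD c) S t f x
      = heatS (qBD c) ((S.erase 0).image (· + d)) t f (x + d) := by
  unfold heatS
  refine tsum_congr fun k => ?_
  congr 1
  refine (iter_shift c S d _ _ (fun v => ?_) k x).symm
  beta_reduce
  rcases Nat.eq_zero_or_pos v with hv | hv
  · subst hv
    have hd : (0 + d) ∉ (S.erase 0).image (· + d) := by
      simp only [Finset.mem_image, Finset.mem_erase, zero_add]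
      rintro ⟨a, ⟨ha0, _⟩, had⟩
      omega
    rw [if_neg hd]
    split
    · exact hf0.symm
    · rfl
  · have hmem : (v + d ∈ (S.erase 0).image (· + d)) ↔ v ∈ S := by
      simp only [Finset.mem_image, Finset.mem_erase]
      constructor
      · rintro ⟨a, ⟨ha0, haS⟩, had⟩
        have hav : a = v := by omega
        rwa [hav] at haS
      · intro hvS
        exact ⟨v, ⟨by omega, hvS⟩, rfl⟩
    by_cases hvS : v ∈ S
    · rw [if_pos (hmem.mpr hvS), if_pos hvS]
      exact hfs v hv
    · rw [if_neg (fun h => hvS (hmem.mp h)), if_neg hvS]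

lemma heatPos_mono (c t : ℝ) (hc : 0 < c) (ht : 0 ≤ t) (f : ℕ → ℝ)
    (hf1 : ∀ v, |f v| ≤ 1) (hf0 : f 0 = 0) (hfs : ∀ d v, 0 < v → f (v + d) = f v)
    (x d : ℕ) : heatPos (qBD c) t f x ≤ heatPos (qBD c) t f (x + d) := by
  unfold heatPos
  have hbdd : BddAbove (Set.range fun S : Finset ℕ => heatS (qBD c) S t f (x + d)) := by
    refine ⟨∑' k : ℕ, (8*c*t) ^ k / (Nat.factorial k : ℝ), ?_⟩
    rintro _ ⟨S, rfl⟩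
    exact heatS_le_B c t hc.le ht S f hf1 (x + d)
  refine ciSup_le fun S => ?_
  rw [heatS_shift c t S d x f hf0 (fun v hv => hfs d v hv)]
  exact le_ciSup hbdd _

lemma heat_of_nonneg (q : ℕ → ℕ → ℝ) (t : ℝ) (f : ℕ → ℝ) (hf : ∀ v, 0 ≤ f v) (x : ℕ) :
    heat q t f x = heatPos q t f x := by
  unfold heat
  have h1 : (fun v => max (f v) 0) = f := funext fun v => max_eq_left (hf v)
  have h2 : (fun v => max (-f v) 0) = fun _ => (0:ℝ) := by
    funext v
    exact max_eq_right (by linarith [hf v])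
  rw [h1, h2]
  have h3 : heatPos q t (fun _ => (0:ℝ)) x = 0 := by
    unfold heatPos
    have hz : ∀ S : Finset ℕ, heatS q S t (fun _ => (0:ℝ)) x = 0 :=
      fun S => heatS_zero_fun q S t x
    simp only [hz, ciSup_const]
  rw [h3, sub_zero]

theorem phiBD_monotone
    (c : ℝ) (hc : 0 < c) (t : ℝ) (ht : 0 ≤ t) (x y : ℕ) (hxy : x ≤ y) :
    phiBD c t x ≤ phiBD c t y := by
  obtain ⟨d, rfl⟩ : ∃ d, y = x + d := ⟨y - x, by omega⟩
  unfold phiBD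
  have hf : ∀ v : ℕ, 0 ≤ (if 0 < v then (1:ℝ) else 0) := by
    intro v; split <;> norm_num
  rw [heat_of_nonneg (qBD c) t _ hf x, heat_of_nonneg (qBD c) t _ hf (x + d)]
  refine heatPos_mono c t hc ht _ (fun v => ?_) ?_ (fun d' v hv => ?_) x d
  · split <;> norm_num
  · simp
  · have h1 : 0 < v + d' := by omega
    rw [if_pos h1, if_pos hv]

end OllivierGraph
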